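/- For every z ∈ 𝔻 and every g ∈ G, the matrix coefficient ⟨π_z(g)δ_x, δ_x⟩ equals z^{d(x, g·x)}. In particular, ⟨c_z(x,y)δ_y, δ_x⟩ = z^{d(x,y)} for all vertices x, y of T. -/

import Mathlib

noncomputable section

open scoped ComplexConjugate

/-- `ℓ²(X)`: the Hilbert space of square-summable complex functions on `X`. -/
abbrev ell2 (X : Type) : Type := lp (fun _ : X => ℂ) 2

/-- The Dirac function `δ_v` at a vertex `v`. -/
noncomputable def delta {X : Type} [DecidableEq X] (v : X) : ell2 X :=
  lp.single 2 v (1 : ℂ)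

/-- `w = √(1 − z²)`, using the principal branch of the square root, which is
holomorphic off the negative real axis and positive on the positive reals. -/
noncomputable def W (z : ℂ) : ℂ := (1 - z ^ 2) ^ ((1 : ℂ) / 2)

/-- The defining property of the edge operator `c_z(x,y)` for adjacent vertices
`x, y`: it sends `δ_x ↦ wδ_x − zδ_y`, `δ_y ↦ wδ_y + zδ_x`, and fixes `δ_v` for
every other vertex `v`. -/
def IsEdgeOp {X : Type} [DecidableEq X] (z : ℂ) (x y : X)
    (A : ell2 X →L[ℂ] ell2 X) : Prop :=
  A (delta x) = W z • delta x - z • delta y ∧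
  A (delta y) = W z • delta y + z • delta x ∧
  ∀ v : X, v ≠ x → v ≠ y → A (delta v) = delta v

/-- The product `f(v₀,v₁) * f(v₁,v₂) * ⋯ * f(v_{n−1},v_n)` along a walk
`v₀, v₁, …, v_n`. -/
def walkProd {X : Type} {T : SimpleGraph X} {E : Type} [Monoid E]
    (f : X → X → E) : {a b : X} → T.Walk a b → E
  | _, _, SimpleGraph.Walk.nil => 1
  | _, _, SimpleGraph.Walk.cons (u := u) (v := v) _ p => f u v * walkProd f p

lemma delta_apply {X : Type} [DecidableEq X] (v w : X) :
    (delta v : ∀ _ : X, ℂ) w = if w = v then 1 else 0 := by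
  rcases eq_or_ne w v with rfl | h
  · simp [delta, lp.single_apply_self]
  · simp [delta, lp.single_apply_ne _ _ _ h, h]

/-- A square-summable function supported on a finite set is the corresponding
finite linear combination of Dirac functions. -/
lemma eq_sum_delta {X : Type} [DecidableEq X] (f : ell2 X) (s : Finset X)
    (hf : ∀ v, v ∉ s → (f : ∀ _ : X, ℂ) v = 0) :
    f = ∑ v ∈ s, (f : ∀ _ : X, ℂ) v • delta v := by
  ext w
  rw [lp.coeFn_sum, Finset.sum_apply]
  have : ∀ v ∈ s, ((f : ∀ _ : X, ℂ) v • delta v : ell2 X) w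
      = if w = v then (f : ∀ _ : X, ℂ) v else 0 := by
    intro v _
    rw [lp.coeFn_smul, Pi.smul_apply, delta_apply]
    split_ifs <;> simp
  rw [Finset.sum_congr rfl this, Finset.sum_ite_eq s w
    (fun v => (f : ∀ _ : X, ℂ) v)]
  split_ifs with h
  · rfl
  · exact hf w h

/-- Pointwise evaluation of a continuous linear map applied to a finitely
supported element of `ℓ²`. -/
lemma clm_eval {X : Type} [DecidableEq X] (A : ell2 X →L[ℂ] ell2 X)
    (f : ell2 X) (s : Finset X)
    (hf : ∀ v, v ∉ s → (f : ∀ _ : X, ℂ) v = 0) (w : X) :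
    (A f : ∀ _ : X, ℂ) w
      = ∑ v ∈ s, (f : ∀ _ : X, ℂ) v * (A (delta v) : ∀ _ : X, ℂ) w := by
  conv_lhs => rw [eq_sum_delta f s hf]
  rw [map_sum, lp.coeFn_sum, Finset.sum_apply]
  refine Finset.sum_congr rfl fun v _ => ?_
  rw [map_smul, lp.coeFn_smul, Pi.smul_apply, smul_eq_mul]

/-- The key induction: along a walk, `walkProd (c z) p (δ_y)` is supported on
the support of `p`, and when `p` is a path its coefficient at the start vertex
is `z ^ p.length`. -/
lemma walkProd_delta {X : Type} [DecidableEq X] {T : SimpleGraph X}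
    (z : ℂ) (c : X → X → (ell2 X →L[ℂ] ell2 X))
    (hedge : ∀ u v : X, T.Adj u v → IsEdgeOp z u v (c u v)) :
    ∀ {x y : X} (p : T.Walk x y),
      (∀ v, v ∉ p.support → (walkProd c p (delta y) : ∀ _ : X, ℂ) v = 0) ∧
      (p.IsPath → (walkProd c p (delta y) : ∀ _ : X, ℂ) x = z ^ p.length) := by
  intro x y p
  induction p with
  | nil =>
    constructor
    · intro v hv
      simp only [SimpleGraph.Walk.support_nil, List.mem_singleton] at hv
      simp [walkProd, delta_apply, hv]
    · intro _
      simp [walkProd, delta_apply]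
  | @cons x u y hadj q ih =>
    obtain ⟨ihsupp, ihhead⟩ := ih
    obtain ⟨hcx, hcu, hcother⟩ := hedge x u hadj
    have hxu : x ≠ u := hadj.ne
    set φ : ell2 X := walkProd c q (delta y) with hφ
    set s : Finset X := q.support.toFinset with hs
    have hφsupp : ∀ v, v ∉ s → (φ : ∀ _ : X, ℂ) v = 0 := by
      intro v hv
      exact ihsupp v (by simpa [hs] using hv)
    have hwp : walkProd c (SimpleGraph.Walk.cons hadj q) (delta y)
        = c x u φ := rfl
    have key : ∀ w : X, (walkProd c (SimpleGraph.Walk.cons hadj q) (delta y) :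
        ∀ _ : X, ℂ) w
        = ∑ v ∈ s, (φ : ∀ _ : X, ℂ) v * (c x u (delta v) : ∀ _ : X, ℂ) w := by
      intro w
      rw [hwp]
      exact clm_eval (c x u) φ s hφsupp w
    have hus : u ∈ s := by simp [hs, SimpleGraph.Walk.start_mem_support]
    constructor
    · intro w hw
      have hwx : w ≠ x := by
        intro h; apply hw; simp [h]
      have hwq : w ∉ q.support := by
        intro h; apply hw; simp [h]
      have hwu : w ≠ u := by
        intro h; exact hwq (h ▸ SimpleGraph.Walk.start_mem_support q)
      rw [key w]
      refine Finset.sum_eq_zero fun v hv => ?_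
      rcases eq_or_ne v x with rfl | hvx
      · rw [hcx, lp.coeFn_sub, Pi.sub_apply, lp.coeFn_smul, lp.coeFn_smul,
          Pi.smul_apply, Pi.smul_apply, delta_apply, delta_apply,
          if_neg hwx, if_neg hwu]
        simp
      rcases eq_or_ne v u with rfl | hvu
      · rw [hcu, lp.coeFn_add, Pi.add_apply, lp.coeFn_smul, lp.coeFn_smul,
          Pi.smul_apply, Pi.smul_apply, delta_apply, delta_apply,
          if_neg hwu, if_neg hwx]
        simp
      · rw [hcother v hvx hvu, delta_apply, if_neg]
        · simp
        · intro h
          exact hwq (by simpa [hs, h] using hv)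
    · intro hp
      have hqp : q.IsPath := hp.of_cons
      have hxq : x ∉ q.support := by
        have := hp.support_nodup
        simp only [SimpleGraph.Walk.support_cons, List.nodup_cons] at this
        exact this.1
      have hxs : x ∉ s := by simpa [hs] using hxq
      rw [key x]
      have hterm : ∀ v ∈ s, (φ : ∀ _ : X, ℂ) v * (c x u (delta v) : ∀ _ : X, ℂ) x
          = if v = u then (φ : ∀ _ : X, ℂ) u * z else 0 := by
        intro v hv
        rcases eq_or_ne v u with rfl | hvu
        · rw [if_pos rfl, hcu, lp.coeFn_add, Pi.add_apply, lp.coeFn_smul,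
            lp.coeFn_smul, Pi.smul_apply, Pi.smul_apply, delta_apply,
            delta_apply, if_neg hxu, if_pos rfl]
          simp
        · have hvx : v ≠ x := fun h => hxs (h ▸ hv)
          rw [if_neg hvu, hcother v hvx hvu, delta_apply, if_neg (Ne.symm hvx)]
          simp
      rw [Finset.sum_congr rfl hterm, Finset.sum_ite_eq' s u
        (fun _ => (φ : ∀ _ : X, ℂ) u * z), if_pos hus, ihhead hqp]
      rw [SimpleGraph.Walk.length_cons, pow_succ]

/-- For every `z ∈ 𝔻` and every `g ∈ G`, the matrix coefficient
`⟨π_z(g)δ_x, δ_x⟩` equals `z^{d(x, g·x)}`.  In particular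
`⟨c_z(x,y)δ_y, δ_x⟩ = z^{d(x,y)}` for all vertices `x, y` of `T`. -/
theorem pi_z_matrix_coefficient {X : Type} [DecidableEq X] (T : SimpleGraph X)
    (hconn : T.Connected) (hacyc : T.IsAcyclic)
    (c : ℂ → X → X → (ell2 X →L[ℂ] ell2 X))
    (hedge : ∀ z ∈ Metric.ball (0 : ℂ) 1, ∀ u v : X, T.Adj u v →
      IsEdgeOp z u v (c z u v))
    (hgeo : ∀ z ∈ Metric.ball (0 : ℂ) 1, ∀ u v : X, ∀ p : T.Walk u v,
      p.length = T.dist u v → c z u v = walkProd (c z) p)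
    {G : Type} [Group G] [MulAction G X]
    (hact : ∀ (g : G) (u v : X), T.Adj u v ↔ T.Adj (g • u) (g • v))
    (U : G → (ell2 X →L[ℂ] ell2 X))
    (hU : ∀ (g : G) (v : X), U g (delta v) = delta (g • v))
    (x₀ : X) :
    ∀ z ∈ Metric.ball (0 : ℂ) 1,
      (∀ g : G,
        (inner ℂ (delta x₀) ((c z x₀ (g • x₀) * U g) (delta x₀)) : ℂ) =
          z ^ (T.dist x₀ (g • x₀))) ∧
      (∀ x y : X, (inner ℂ (delta x) (c z x y (delta y)) : ℂ) = z ^ (T.dist x y)) := by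
  intro z hz
  have main : ∀ x y : X, (inner ℂ (delta x) (c z x y (delta y)) : ℂ)
      = z ^ (T.dist x y) := by
    intro x y
    obtain ⟨p, hpath, hlen⟩ := hconn.exists_path_of_dist x y
    rw [hgeo z hz x y p hlen]
    have := (walkProd_delta z (c z) (hedge z hz) p).2 hpath
    rw [delta, lp.inner_single_left]
    simp only [RCLike.inner_apply, map_one, one_mul]
    rw [this, hlen, mul_one]
  refine ⟨fun g => ?_, main⟩
  rw [ContinuousLinearMap.mul_apply, hU g x₀]
  exact main x₀ (g • x₀)
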